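/- For 0 < r < 1 and θ ∈ (0, π), let Q = diag(1/(1−r²), r², r² sin²θ) and let U be the 3×3 real antisymmetric matrix whose only nonzero entries are U_{23} = r³ sinθ = −U_{32}. Then the eigenvalues of the matrix iQ⁻¹U are exactly {r, 0, −r}; hence the asymptotic incompatibility measure R = largest eigenvalue of iQ⁻¹U equals r, and in terms of the purity μ = (1 + r²)/2 of the corresponding qubit state one has R = √(2μ − 1). -/

import Mathlib

open Matrix Polynomial

set_option linter.unnecessarySeqFocus false
set_option linter.unusedTactic false

/-- For the qubit full-tomography model with `Q = diag(1/(1−r²), r², r² sin²θ)` and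
Uhlmann matrix `U` with only nonzero entries `U₂₃ = r³ sinθ = −U₃₂`, the eigenvalues of
`iQ⁻¹U` are exactly `{r, 0, −r}`; hence the asymptotic incompatibility measure (the
largest eigenvalue of `iQ⁻¹U`) equals `r = √(2μ − 1)`, where `μ = (1 + r²)/2` is the
purity of the qubit state. -/
theorem stmt11 (r θ : ℝ) (hr0 : 0 < r) (hr1 : r < 1) (hθ : θ ∈ Set.Ioo 0 Real.pi) :
    ((Complex.I • ((((!![1 / (1 - r ^ 2), 0, 0;
                        0, r ^ 2, 0;
                        0, 0, r ^ 2 * Real.sin θ ^ 2] : Matrix (Fin 3) (Fin 3) ℝ))⁻¹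
        * (!![0, 0, 0;
              0, 0, r ^ 3 * Real.sin θ;
              0, -(r ^ 3 * Real.sin θ), 0] : Matrix (Fin 3) (Fin 3) ℝ)).map
          Complex.ofReal)).charpoly).roots = {(r : ℂ), 0, -(r : ℂ)} ∧
    (∀ z ∈ ((Complex.I • ((((!![1 / (1 - r ^ 2), 0, 0;
                        0, r ^ 2, 0;
                        0, 0, r ^ 2 * Real.sin θ ^ 2] : Matrix (Fin 3) (Fin 3) ℝ))⁻¹
        * (!![0, 0, 0;
              0, 0, r ^ 3 * Real.sin θ;
              0, -(r ^ 3 * Real.sin θ), 0] : Matrix (Fin 3) (Fin 3) ℝ)).map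
          Complex.ofReal)).charpoly).roots, z.re ≤ r) ∧
    Real.sqrt (2 * ((1 + r ^ 2) / 2) - 1) = r := by
  set s := Real.sin θ with hs
  have hspos : 0 < s := Real.sin_pos_of_pos_of_lt_pi hθ.1 hθ.2
  have hsne : s ≠ 0 := ne_of_gt hspos
  have hrne : r ≠ 0 := ne_of_gt hr0
  have hsC : (s : ℂ) ≠ 0 := by exact_mod_cast hsne
  have hrC : (r : ℂ) ≠ 0 := by exact_mod_cast hrne
  have h1r : (1 : ℝ) - r ^ 2 ≠ 0 := by nlinarith
  have hQinv : (!![1 / (1 - r ^ 2), 0, 0;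
                        0, r ^ 2, 0;
                        0, 0, r ^ 2 * s ^ 2] : Matrix (Fin 3) (Fin 3) ℝ)⁻¹
      = !![1 - r ^ 2, 0, 0; 0, 1 / r ^ 2, 0; 0, 0, 1 / (r ^ 2 * s ^ 2)] := by
    apply Matrix.inv_eq_right_inv
    ext i j
    fin_cases i <;> fin_cases j <;>
      simp [Matrix.mul_apply, Fin.sum_univ_three, Matrix.vecHead, Matrix.vecTail] <;>
      field_simp <;> ring
  have hM : (Complex.I • ((((!![1 / (1 - r ^ 2), 0, 0;
                        0, r ^ 2, 0;
                        0, 0, r ^ 2 * s ^ 2] : Matrix (Fin 3) (Fin 3) ℝ))⁻¹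
        * (!![0, 0, 0;
              0, 0, r ^ 3 * s;
              0, -(r ^ 3 * s), 0] : Matrix (Fin 3) (Fin 3) ℝ)).map
          Complex.ofReal))
      = !![0, 0, 0; 0, 0, Complex.I * (r * s); 0, Complex.I * (-(r / s)), 0] := by
    rw [hQinv]
    ext i j
    fin_cases i <;> fin_cases j <;>
      simp [Matrix.mul_apply, Fin.sum_univ_three, Matrix.vecHead, Matrix.vecTail] <;>
      push_cast <;> field_simp <;> ring
  have hab' : (Complex.I * ((r:ℂ) * s)) * (Complex.I * ((r:ℂ)/s)) = -((r:ℂ)^2) := by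
    have h2 : (Complex.I:ℂ)^2 = -1 := Complex.I_sq
    field_simp
    linear_combination h2
  have h3 : ((C Complex.I * (C (r:ℂ) * C (s:ℂ))) * (C Complex.I * C ((r:ℂ)/(s:ℂ))) : ℂ[X])
      = - C (r:ℂ) ^ 2 := by
    simp only [← Polynomial.C_mul]
    rw [hab', map_neg, map_pow]
  have hcp : (!![0, 0, 0; 0, 0, Complex.I * (r * s);
      0, Complex.I * (-(r / s)), 0] : Matrix (Fin 3) (Fin 3) ℂ).charpoly
      = X * (X - C (r : ℂ)) * (X + C (r : ℂ)) := by
    rw [Matrix.charpoly, Matrix.det_fin_three]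
    simp [charmatrix_apply, Matrix.vecHead, Matrix.vecTail]
    linear_combination (X : ℂ[X]) * h3
  have hX : (X : ℂ[X]) ≠ 0 := X_ne_zero
  have h1 : (X - C (r:ℂ)) ≠ 0 := X_sub_C_ne_zero _
  have h2 : (X + C (r:ℂ)) ≠ 0 := by
    simpa [sub_neg_eq_add] using X_sub_C_ne_zero (-(r:ℂ))
  have hroots : ((Complex.I • ((((!![1 / (1 - r ^ 2), 0, 0;
                        0, r ^ 2, 0;
                        0, 0, r ^ 2 * s ^ 2] : Matrix (Fin 3) (Fin 3) ℝ))⁻¹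
        * (!![0, 0, 0;
              0, 0, r ^ 3 * s;
              0, -(r ^ 3 * s), 0] : Matrix (Fin 3) (Fin 3) ℝ)).map
          Complex.ofReal)).charpoly).roots = {(r : ℂ), 0, -(r : ℂ)} := by
    rw [hM, hcp]
    rw [Polynomial.roots_mul (mul_ne_zero (mul_ne_zero hX h1) h2),
        Polynomial.roots_mul (mul_ne_zero hX h1), Polynomial.roots_X,
        Polynomial.roots_X_sub_C]
    rw [show (X + C (r:ℂ)) = X - C (-(r:ℂ)) by rw [map_neg, sub_neg_eq_add],
        Polynomial.roots_X_sub_C]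
    have hperm : ({0, (r:ℂ), -(r:ℂ)} : Multiset ℂ) = {(r:ℂ), 0, -(r:ℂ)} :=
      Multiset.cons_swap _ _ _
    rw [← hperm]
    rfl
  refine ⟨hroots, ?_, ?_⟩
  · intro z hz
    rw [hroots] at hz
    simp only [Multiset.insert_eq_cons, Multiset.mem_cons, Multiset.mem_singleton] at hz
    rcases hz with h | h | h <;> subst h <;> simp <;> linarith
  · have : 2 * ((1 + r ^ 2) / 2) - 1 = r ^ 2 := by ring
    rw [this, Real.sqrt_sq hr0.le]
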